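/- Let Q ∈ ℝ^{m×m} be symmetric positive definite, q ∈ ℝ^m, G ∈ ℝ^{n×m}, b ∈ ℝ^n, and ρ ∈ ℝ^n with ρ_i > 0 for all i. Set M = G Q⁻¹ Gᵀ, r = G Q⁻¹ q + b, H = diag(ρ) M diag(ρ), and h = diag(ρ)(Mρ + 2r). If z* is a global minimizer of the scaled box-constrained QP min_{z∈ℝ^n} ½zᵀHz + hᵀz subject to −e ≤ z ≤ e (where e is the all-ones vector), then y* = −Q⁻¹(q + ½Gᵀ(ρ z* + ρ)) is a global minimizer of the vector ℓ1-penalty objective φ_ρ(y) = ½yᵀQy + qᵀy + Σ_{i=1}^n ρ_i max(0, (Gy − b)_i), where ρ z* denotes the componentwise (Hadamard) product. -/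

import Mathlib

open Matrix Finset

/-- Auxiliary: if a quadratic `t ↦ t*γ + t^2*a` is nonnegative on a right
neighborhood `(0, T]` of `0`, then `γ ≥ 0`. -/
lemma aux_quad_nonneg (a γ T : ℝ) (hT : 0 < T)
    (hq : ∀ t : ℝ, 0 < t → t ≤ T → 0 ≤ t * γ + t ^ 2 * a) : 0 ≤ γ := by
  by_contra hγ
  push_neg at hγ
  set A : ℝ := max a 0 with hA
  have hA0 : 0 ≤ A := le_max_right _ _
  have haA : a ≤ A := le_max_left _ _
  set t : ℝ := min T ((-γ) / (A + 1)) with ht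
  have ht0 : 0 < t := lt_min hT (div_pos (by linarith) (by linarith))
  have htT : t ≤ T := min_le_left _ _
  have htγ : t ≤ (-γ) / (A + 1) := min_le_right _ _
  have htγ' : t * (A + 1) ≤ -γ := (le_div_iff₀ (by linarith : (0:ℝ) < A + 1)).mp htγ
  have hnn := hq t ht0 htT
  nlinarith [mul_pos ht0 ht0, mul_le_mul_of_nonneg_left htγ' ht0.le,
    mul_le_mul_of_nonneg_left haA (mul_pos ht0 ht0).le]

/-- if `z*` globally minimizes the scaled box-constrained QP
`min ½zᵀHz + hᵀz, −e ≤ z ≤ e` with `H = diag(ρ) M diag(ρ)`, `h = diag(ρ)(Mρ + 2r)`,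
`M = G Q⁻¹ Gᵀ`, `r = G Q⁻¹ q + b`, then `y* = −Q⁻¹(q + ½Gᵀ(ρz* + ρ))` globally minimizes
the vector ℓ1-penalty objective `φ_ρ`. -/
theorem scaled_boxQP_recovers_l1_penalty {m n : ℕ}
    (Q : Matrix (Fin m) (Fin m) ℝ) (hQ : Q.PosDef)
    (q : Fin m → ℝ) (G : Matrix (Fin n) (Fin m) ℝ) (b : Fin n → ℝ)
    (ρ : Fin n → ℝ) (hρ : ∀ i, 0 < ρ i)
    (M : Matrix (Fin n) (Fin n) ℝ) (hM : M = G * Q⁻¹ * Gᵀ)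
    (r : Fin n → ℝ) (hr : r = G.mulVec (Q⁻¹.mulVec q) + b)
    (H : Matrix (Fin n) (Fin n) ℝ) (hH : H = Matrix.diagonal ρ * M * Matrix.diagonal ρ)
    (h : Fin n → ℝ) (hh : h = (Matrix.diagonal ρ).mulVec (M.mulVec ρ + (2 : ℝ) • r))
    (φρ : (Fin m → ℝ) → ℝ)
    (hφρ : φρ = fun y => (1/2) * (y ⬝ᵥ Q.mulVec y) + q ⬝ᵥ y
        + ∑ i, ρ i * max 0 (G.mulVec y i - b i))
    (zstar : Fin n → ℝ)
    (hzbox : ∀ i, -1 ≤ zstar i ∧ zstar i ≤ 1)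
    (hzmin : ∀ z : Fin n → ℝ, (∀ i, -1 ≤ z i ∧ z i ≤ 1) →
      (1/2) * (zstar ⬝ᵥ H.mulVec zstar) + h ⬝ᵥ zstar ≤
        (1/2) * (z ⬝ᵥ H.mulVec z) + h ⬝ᵥ z)
    (ystar : Fin m → ℝ)
    (hy : ystar = -(Q⁻¹.mulVec (q + (1/2 : ℝ) • Gᵀ.mulVec (fun i => ρ i * zstar i + ρ i)))) :
    ∀ y, φρ ystar ≤ φρ y := by
  -- basic facts about Q
  have hQdet : IsUnit Q.det := hQ.det_pos.ne'.isUnit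
  have hQinv : Q * Q⁻¹ = 1 := Matrix.mul_nonsing_inv Q hQdet
  have hQinv' : Q⁻¹ * Q = 1 := Matrix.nonsing_inv_mul Q hQdet
  have hQsymm : Qᵀ = Q := by
    rw [← Matrix.conjTranspose_eq_transpose_of_trivial]; exact hQ.1
  have hQisymm : (Q⁻¹)ᵀ = Q⁻¹ := by
    rw [Matrix.transpose_nonsing_inv, hQsymm]
  have hMsymm : Mᵀ = M := by
    rw [hM]; simp [Matrix.transpose_mul, hQisymm, Matrix.mul_assoc]
  have hHsymm : Hᵀ = H := by
    rw [hH]; simp [Matrix.transpose_mul, hMsymm, Matrix.mul_assoc]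
  -- the multiplier vector
  set w : Fin n → ℝ := fun i => (ρ i * zstar i + ρ i) / 2 with hw
  -- ystar in terms of w
  have hwv : ((1/2 : ℝ) • fun i => ρ i * zstar i + ρ i) = w := by
    funext i
    simp only [Pi.smul_apply, smul_eq_mul, hw]
    ring
  have hys : ystar = -(Q⁻¹.mulVec (q + Gᵀ.mulVec w)) := by
    rw [hy, ← Matrix.mulVec_smul, hwv]
  have hQy : Q.mulVec ystar = -(q + Gᵀ.mulVec w) := by
    rw [hys, Matrix.mulVec_neg, Matrix.mulVec_mulVec, hQinv, Matrix.one_mulVec]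
  -- slack vector
  set s : Fin n → ℝ := G.mulVec ystar - b with hs
  have hMw : M.mulVec w = G.mulVec (Q⁻¹.mulVec (Gᵀ.mulVec w)) := by
    rw [hM, Matrix.mulVec_mulVec, Matrix.mulVec_mulVec]
  have hGys : G.mulVec ystar = -(G.mulVec (Q⁻¹.mulVec q) + M.mulVec w) := by
    rw [hys, Matrix.mulVec_neg, Matrix.mulVec_add, Matrix.mulVec_add, ← hMw]
  have hsMw : M.mulVec w + r = -s := by
    funext j
    simp only [hs, hr, hGys, Pi.add_apply, Pi.neg_apply, Pi.sub_apply]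
    ring
  -- gradient of the box QP at zstar
  set g : Fin n → ℝ := H.mulVec zstar + h with hg
  have hgval : ∀ i, g i = -2 * ρ i * s i := by
    intro i
    have h1 : H.mulVec zstar = (Matrix.diagonal ρ).mulVec (M.mulVec ((Matrix.diagonal ρ).mulVec zstar)) := by
      rw [hH, ← Matrix.mulVec_mulVec, ← Matrix.mulVec_mulVec]
    have h2 : (Matrix.diagonal ρ).mulVec zstar + ρ = (2:ℝ) • w := by
      funext j
      simp [Matrix.mulVec_diagonal, hw, Pi.smul_apply, smul_eq_mul]
      ring
    have : g i = ρ i * ((M.mulVec ((Matrix.diagonal ρ).mulVec zstar + ρ) + (2:ℝ) • r) i) := by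
      simp only [hg, h1, hh, Pi.add_apply, Matrix.mulVec_diagonal, Matrix.mulVec_add]
      ring
    rw [this, h2, Matrix.mulVec_smul]
    have h4 := congrFun hsMw i
    simp only [Pi.add_apply, Pi.neg_apply] at h4
    simp only [Pi.add_apply, Pi.smul_apply, smul_eq_mul]
    linear_combination (2 * ρ i) * h4
  -- quadratic expansion of the box objective along coordinate directions
  have hexp : ∀ (i : Fin n) (t : ℝ),
      (1/2) * ((zstar + Pi.single i t) ⬝ᵥ H.mulVec (zstar + Pi.single i t))
        + h ⬝ᵥ (zstar + Pi.single i t)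
      = ((1/2) * (zstar ⬝ᵥ H.mulVec zstar) + h ⬝ᵥ zstar)
        + t * g i + t ^ 2 * (H i i) / 2 := by
    intro i t
    have e1 : zstar ⬝ᵥ H.mulVec (Pi.single i t) = t * (H.mulVec zstar i) := by
      rw [Matrix.dotProduct_mulVec, ← Matrix.mulVec_transpose, hHsymm,
        dotProduct_single, mul_comm]
    have e2 : (Pi.single i t : Fin n → ℝ) ⬝ᵥ H.mulVec zstar = t * (H.mulVec zstar i) := by
      rw [single_dotProduct]
    have e3 : (Pi.single i t : Fin n → ℝ) ⬝ᵥ H.mulVec (Pi.single i t) = t ^ 2 * H i i := by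
      simp only [single_dotProduct, Matrix.mulVec_single, Pi.smul_apply, Matrix.col_apply, op_smul_eq_mul]
      ring
    have e4 : h ⬝ᵥ (Pi.single i t : Fin n → ℝ) = h i * t := dotProduct_single _ _ _
    rw [Matrix.mulVec_add, dotProduct_add, add_dotProduct,
      add_dotProduct, dotProduct_add, e1, e2, e3, e4]
    simp only [hg, Pi.add_apply]
    ring
  -- stationarity conditions
  have hstat1 : ∀ i, zstar i < 1 → 0 ≤ g i := by
    intro i hi
    apply aux_quad_nonneg (H i i / 2) (g i) (1 - zstar i) (by linarith)
    intro t ht0 htT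
    have hfeas : ∀ j, -1 ≤ (zstar + Pi.single i t : Fin n → ℝ) j ∧ (zstar + Pi.single i t : Fin n → ℝ) j ≤ 1 := by
      intro j
      by_cases hji : j = i
      · subst hji
        simp only [Pi.add_apply, Pi.single_eq_same]
        constructor
        · linarith [(hzbox j).1]
        · linarith
      · simp only [Pi.add_apply, Pi.single_eq_of_ne hji]
        simpa using hzbox j
    have := hzmin _ hfeas
    rw [hexp i t] at this
    nlinarith
  have hstat2 : ∀ i, -1 < zstar i → g i ≤ 0 := by
    intro i hi
    have : 0 ≤ -g i := by
      apply aux_quad_nonneg (H i i / 2) (-g i) (zstar i + 1) (by linarith)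
      intro t ht0 htT
      have hfeas : ∀ j, -1 ≤ (zstar + Pi.single i (-t) : Fin n → ℝ) j ∧ (zstar + Pi.single i (-t) : Fin n → ℝ) j ≤ 1 := by
        intro j
        by_cases hji : j = i
        · subst hji
          simp only [Pi.add_apply, Pi.single_eq_same]
          constructor
          · linarith
          · linarith [(hzbox j).2]
        · simp only [Pi.add_apply, Pi.single_eq_of_ne hji]
          simpa using hzbox j
      have := hzmin _ hfeas
      rw [hexp i (-t)] at this
      nlinarith
    linarith
  -- complementarity
  have hcomp : ∀ i, w i * s i = ρ i * max 0 (s i) := by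
    intro i
    rcases lt_trichotomy (s i) 0 with hsi | hsi | hsi
    · -- s i < 0: then g i > 0, so zstar i = -1, w i = 0
      have hgi : 0 < g i := by rw [hgval i]; nlinarith [hρ i]
      have hz : zstar i = -1 := by
        by_contra hne
        have : -1 < zstar i := lt_of_le_of_ne (hzbox i).1 (Ne.symm hne)
        linarith [hstat2 i this]
      have hwi : w i = 0 := by simp only [hw, hz]; ring
      rw [hwi, max_eq_left hsi.le]
      ring
    · rw [hsi]; simp
    · -- s i > 0: g i < 0, so zstar i = 1, w i = ρ i
      have hgi : g i < 0 := by rw [hgval i]; nlinarith [hρ i]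
      have hz : zstar i = 1 := by
        by_contra hne
        have : zstar i < 1 := lt_of_le_of_ne (hzbox i).2 hne
        linarith [hstat1 i this]
      have hwi : w i = ρ i := by simp only [hw, hz]; ring
      rw [hwi, max_eq_right hsi.le]
  -- bounds on w
  have hwb : ∀ i, 0 ≤ w i ∧ w i ≤ ρ i := by
    intro i
    have h1 := (hzbox i).1
    have h2 := (hzbox i).2
    have := hρ i
    constructor <;> · simp only [hw]; nlinarith
  -- the Lagrangian-type auxiliary function
  set F : (Fin m → ℝ) → ℝ := fun y =>
    (1/2) * (y ⬝ᵥ Q.mulVec y) + q ⬝ᵥ y + w ⬝ᵥ (G.mulVec y - b) with hF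
  -- φρ y ≥ F y for all y
  have hFle : ∀ y, F y ≤ φρ y := by
    intro y
    rw [hφρ, hF]
    simp only
    have : w ⬝ᵥ (G.mulVec y - b) ≤ ∑ i, ρ i * max 0 (G.mulVec y i - b i) := by
      rw [dotProduct]
      apply Finset.sum_le_sum
      intro i _
      have hb := hwb i
      simp only [Pi.sub_apply]
      rcases le_or_gt 0 (G.mulVec y i - b i) with hc | hc
      · calc w i * (G.mulVec y i - b i) ≤ ρ i * (G.mulVec y i - b i) := by nlinarith
          _ = ρ i * max 0 (G.mulVec y i - b i) := by rw [max_eq_right hc]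
      · calc w i * (G.mulVec y i - b i) ≤ 0 := by nlinarith
          _ ≤ ρ i * max 0 (G.mulVec y i - b i) := by
              have := (hρ i).le
              have : (0:ℝ) ≤ max 0 (G.mulVec y i - b i) := le_max_left _ _
              positivity
    linarith
  -- φρ ystar = F ystar
  have hFeq : φρ ystar = F ystar := by
    rw [hφρ, hF]
    simp only
    congr 1
    rw [dotProduct]
    apply Finset.sum_congr rfl
    intro i _
    have := hcomp i
    simp only [hs, Pi.sub_apply] at this ⊢
    linarith [this]
  -- F ystar ≤ F y for all y
  intro y
  have hFmin : F ystar ≤ F y := by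
    have hpos : 0 ≤ (y - ystar) ⬝ᵥ Q.mulVec (y - ystar) := by
      have := hQ.posSemidef.dotProduct_mulVec_nonneg (y - ystar)
      simpa using this
    have e1 : (y - ystar) ⬝ᵥ Q.mulVec (y - ystar)
        = y ⬝ᵥ Q.mulVec y - y ⬝ᵥ Q.mulVec ystar - ystar ⬝ᵥ Q.mulVec y
          + ystar ⬝ᵥ Q.mulVec ystar := by
      simp only [Matrix.mulVec_sub, dotProduct_sub, sub_dotProduct]
      ring
    have e3 : ystar ⬝ᵥ Q.mulVec y = y ⬝ᵥ Q.mulVec ystar := by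
      rw [Matrix.dotProduct_mulVec, ← Matrix.mulVec_transpose, hQsymm,
        dotProduct_comm]
    have e2 : y ⬝ᵥ Q.mulVec ystar = -(q ⬝ᵥ y + (Gᵀ.mulVec w) ⬝ᵥ y) := by
      rw [hQy]
      rw [dotProduct_neg, dotProduct_add]
      rw [dotProduct_comm y q, dotProduct_comm y (Gᵀ.mulVec w)]
    have e4 : ystar ⬝ᵥ Q.mulVec ystar = -(q ⬝ᵥ ystar + (Gᵀ.mulVec w) ⬝ᵥ ystar) := by
      rw [hQy]
      rw [dotProduct_neg, dotProduct_add]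
      rw [dotProduct_comm ystar q, dotProduct_comm ystar (Gᵀ.mulVec w)]
    have e5 : ∀ v : Fin m → ℝ, w ⬝ᵥ (G.mulVec v - b) = (Gᵀ.mulVec w) ⬝ᵥ v - w ⬝ᵥ b := by
      intro v
      rw [dotProduct_sub, Matrix.dotProduct_mulVec, ← Matrix.mulVec_transpose]
    rw [hF]
    simp only
    rw [e5 y, e5 ystar]
    rw [e1, e3, e2, e4] at hpos
    linarith
  calc φρ ystar = F ystar := hFeq
    _ ≤ F y := hFmin
    _ ≤ φρ y := hFle y
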